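/- The inverse Lax curve φ_r is strictly increasing on (0,∞): for all 0 < h₁ < h₂ one has φ_r(h₁) < φ_r(h₂). -/
import Mathlib


/-- Inverse Lax curve through the right state `(hr, vr)`. -/
noncomputable def phir (g hr vr h : ℝ) : ℝ :=
  if h ≤ hr then vr - 2 * Real.sqrt (g * hr) + 2 * Real.sqrt (g * h)
  else vr + (h - hr) * Real.sqrt (g * (h + hr) / (2 * h * hr))

/-- Discharge-form inverse Lax curve through the right state. -/
noncomputable def phirTilde (g hr vr h : ℝ) : ℝ := h * phir g hr vr h

/-- The inverse Lax curve `φ_r` is strictly increasing on `(0, ∞)`. -/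
theorem phir_strictMono (g hr vr : ℝ) (hg : 0 < g) (hhr : 0 < hr) :
    ∀ h₁ h₂ : ℝ, 0 < h₁ → h₁ < h₂ → phir g hr vr h₁ < phir g hr vr h₂ := by
  intro h₁ h₂ hp1 hlt
  have hp2 : 0 < h₂ := hp1.trans hlt
  unfold phir
  by_cases c2 : h₂ ≤ hr
  · have c1 : h₁ ≤ hr := le_of_lt (lt_of_lt_of_le hlt c2)
    rw [if_pos c1, if_pos c2]
    have : Real.sqrt (g * h₁) < Real.sqrt (g * h₂) :=
      Real.sqrt_lt_sqrt (by positivity) (by nlinarith)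
    linarith
  · push_neg at c2
    rw [if_neg (not_le.mpr c2)]
    by_cases c1 : h₁ ≤ hr
    · rw [if_pos c1]
      have h1 : Real.sqrt (g * h₁) ≤ Real.sqrt (g * hr) :=
        Real.sqrt_le_sqrt (by nlinarith)
      have h2 : 0 < (h₂ - hr) * Real.sqrt (g * (h₂ + hr) / (2 * h₂ * hr)) := by
        apply mul_pos (by linarith)
        apply Real.sqrt_pos.mpr
        positivity
      linarith
    · push_neg at c1
      rw [if_neg (not_le.mpr c1)]
      have hb1 : (0:ℝ) ≤ g * (h₁ + hr) / (2 * h₁ * hr) := by positivity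
      have hb2 : (0:ℝ) ≤ g * (h₂ + hr) / (2 * h₂ * hr) := by positivity
      have hs1 := Real.sq_sqrt hb1
      have hs2 := Real.sq_sqrt hb2
      have hn1 : 0 ≤ Real.sqrt (g * (h₁ + hr) / (2 * h₁ * hr)) := Real.sqrt_nonneg _
      have hn2 : 0 ≤ Real.sqrt (g * (h₂ + hr) / (2 * h₂ * hr)) := Real.sqrt_nonneg _
      have e1 : 0 < h₁ * h₂ - hr ^ 2 := by nlinarith
      have e2 : 0 < h₁ + h₂ - 2 * hr := by linarith
      have poly : (h₁ - hr) ^ 2 * (h₁ + hr) * h₂ < (h₂ - hr) ^ 2 * (h₂ + hr) * h₁ := by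
        nlinarith [mul_pos (sub_pos.mpr hlt) (mul_pos e2 (mul_pos hp1 hp2)),
          mul_pos (sub_pos.mpr hlt) (mul_pos hhr e1)]
      have sq_lt : ((h₁ - hr) * Real.sqrt (g * (h₁ + hr) / (2 * h₁ * hr))) ^ 2 <
          ((h₂ - hr) * Real.sqrt (g * (h₂ + hr) / (2 * h₂ * hr))) ^ 2 := by
        rw [mul_pow, mul_pow, hs1, hs2]
        rw [mul_div_assoc', mul_div_assoc', div_lt_div_iff₀ (by positivity) (by positivity)]
        nlinarith [mul_lt_mul_of_pos_left poly (show (0:ℝ) < 2 * g * hr by positivity)]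
      have key : (h₁ - hr) * Real.sqrt (g * (h₁ + hr) / (2 * h₁ * hr)) <
          (h₂ - hr) * Real.sqrt (g * (h₂ + hr) / (2 * h₂ * hr)) := by
        refine lt_of_pow_lt_pow_left₀ 2 ?_ sq_lt
        exact mul_nonneg (by linarith) hn2
      linarith
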